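/- Let M = (m_{ij}) be a symmetric negative definite real r×r matrix with m_{ij} ≥ 0 for all i ≠ j. If x ∈ ℝ^r satisfies (Mx)_i ≤ 0 for every i, then x_i ≥ 0 for every i. -/

import Mathlib

/-- If M is a symmetric negative definite real matrix with nonnegative off-diagonal
entries, and (Mx)_i ≤ 0 for every i, then x_i ≥ 0 for every i. -/
theorem stmt5 (r : ℕ) (M : Matrix (Fin r) (Fin r) ℝ)
    (hsym : M.IsSymm)
    (hneg : ∀ v : Fin r → ℝ, v ≠ 0 → dotProduct v (M.mulVec v) < 0)
    (hoff : ∀ i j, i ≠ j → 0 ≤ M i j)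
    (x : Fin r → ℝ) (hx : ∀ i, M.mulVec x i ≤ 0) :
    ∀ i, 0 ≤ x i := by
  set u : Fin r → ℝ := fun i => max (-x i) 0 with hu
  set p : Fin r → ℝ := fun i => max (x i) 0 with hp
  have hu0 : ∀ i, 0 ≤ u i := fun i => le_max_right _ _
  have hp0 : ∀ i, 0 ≤ p i := fun i => le_max_right _ _
  have hup : ∀ i, u i * p i = 0 := by
    intro i
    rcases le_total (x i) 0 with h | h
    · have : p i = 0 := max_eq_right h
      rw [this, mul_zero]
    · have : u i = 0 := max_eq_right (by linarith)
      rw [this, zero_mul]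
  have hpe : p = x + u := by
    funext i
    rcases le_total (x i) 0 with h | h
    · have h1 : p i = 0 := max_eq_right h
      have h2 : u i = -x i := max_eq_left (by linarith)
      simp only [Pi.add_apply, h1, h2]; ring
    · have h1 : p i = x i := max_eq_left h
      have h2 : u i = 0 := max_eq_right (by linarith)
      simp only [Pi.add_apply, h1, h2]; ring
  have key : (0:ℝ) ≤ dotProduct u (M.mulVec u) := by
    have hsplit : dotProduct u (M.mulVec p)
        = dotProduct u (M.mulVec x) + dotProduct u (M.mulVec u) := by
      rw [hpe, Matrix.mulVec_add, dotProduct_add]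
    have h1 : (0:ℝ) ≤ dotProduct u (M.mulVec p) := by
      simp only [Matrix.mulVec, dotProduct]
      apply Finset.sum_nonneg
      intro i _
      rw [Finset.mul_sum]
      apply Finset.sum_nonneg
      intro j _
      rcases eq_or_ne i j with rfl | hij
      · have : u i * (M i i * p i) = M i i * (u i * p i) := by ring
        rw [this, hup i, mul_zero]
      · exact mul_nonneg (hu0 i) (mul_nonneg (hoff i j hij) (hp0 j))
    have h2 : dotProduct u (M.mulVec x) ≤ 0 := by
      unfold dotProduct
      apply Finset.sum_nonpos
      intro i _
      exact mul_nonpos_of_nonneg_of_nonpos (hu0 i) (hx i)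
    linarith
  have hu_zero : u = 0 := by
    by_contra hne
    exact absurd key (not_le.mpr (hneg u hne))
  intro i
  have : u i = 0 := congrFun hu_zero i
  have : max (-x i) 0 = 0 := this
  have := le_of_max_le_left (le_of_eq this)
  linarith
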